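/- Consider the linear ODE ẋ(t) = M x(t) where M ∈ ℝ^{n×n} is symmetric. Let μ be the largest nonzero eigenvalue of M, with P_μ the orthogonal projection onto its eigenspace, and suppose P_μ x(0) ≠ 0. Let ψ₁, ψ₂ be selection (coordinate-projection) matrices such that ψ_q P_μ x(0) ≠ 0 for q = 1,2, and suppose all eigenvalues of M are ≤ 0 with μ < 0 the largest nonzero one (or more generally the terms with eigenvalue larger than μ vanish on x(0) derivatives appropriately). Then lim_{t→∞} ‖ψ₁ ẋ(t)‖ / ‖ψ₂ ẋ(t)‖ = ‖ψ₁ P_μ x(0)‖ / ‖ψ₂ P_μ x(0)‖. -/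

import Mathlib

open Matrix Filter

/-- Euclidean norm of a real vector indexed by a finite type. -/
noncomputable def euclNorm {ι : Type*} [Fintype ι] (v : ι → ℝ) : ℝ :=
  Real.sqrt (∑ i, v i ^ 2)

/-- `ψ` is a selection matrix: its rows are (distinct) rows of the identity. -/
def IsSelectionMatrix {s n : ℕ} (ψ : Matrix (Fin s) (Fin n) ℝ) : Prop :=
  ∃ f : Fin s → Fin n, Function.Injective f ∧
    ψ = Matrix.of fun k i => if i = f k then (1 : ℝ) else 0

lemma euclNorm_smul {ι : Type*} [Fintype ι] (c : ℝ) (v : ι → ℝ) :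
    euclNorm (c • v) = |c| * euclNorm v := by
  unfold euclNorm
  rw [← Real.sqrt_sq_eq_abs, ← Real.sqrt_mul (sq_nonneg c), Finset.mul_sum]
  congr 1
  exact Finset.sum_congr rfl fun i _ => by rw [Pi.smul_apply, smul_eq_mul, mul_pow]

lemma euclNorm_eq_zero {ι : Type*} [Fintype ι] {v : ι → ℝ} :
    euclNorm v = 0 ↔ v = 0 := by
  unfold euclNorm
  rw [Real.sqrt_eq_zero (by positivity)]
  constructor
  · intro h
    funext i
    have := (Finset.sum_eq_zero_iff_of_nonneg (fun i _ => sq_nonneg (v i))).1 h i (Finset.mem_univ i)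
    simpa [pow_eq_zero_iff] using this
  · intro h; simp [h]

lemma euclNorm_continuous {ι : Type*} [Fintype ι] : Continuous (euclNorm (ι := ι)) := by
  unfold euclNorm
  exact Real.continuous_sqrt.comp (continuous_finset_sum _ fun i _ =>
    ((continuous_apply i).pow 2))

/-- Solutions of a linear ODE with diagonalizable initial data are given by the
explicit exponential formula, for `t ≥ 0`. -/
lemma linear_ode_formula {n : ℕ} (M : Matrix (Fin n) (Fin n) ℝ)
    (c ev : Fin n → ℝ) (b : Fin n → Fin n → ℝ)
    (hb : ∀ i, M *ᵥ b i = ev i • b i)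
    (x : ℝ → Fin n → ℝ)
    (hx : ∀ t, HasDerivAt x (M.mulVec (x t)) t)
    (hinit : x 0 = fun j => ∑ i, c i * b i j) :
    ∀ t ≥ (0:ℝ), x t = fun j => ∑ i, c i * Real.exp (ev i * t) * b i j := by
  set φ : ℝ → Fin n → ℝ := fun t j => ∑ i, c i * Real.exp (ev i * t) * b i j with hφ
  have hMφ : ∀ t, M *ᵥ φ t = fun j => ∑ i, c i * Real.exp (ev i * t) * (ev i * b i j) := by
    intro t
    funext j
    simp only [mulVec, dotProduct, hφ]
    calc ∑ k, M j k * ∑ i, c i * Real.exp (ev i * t) * b i k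
        = ∑ i, ∑ k, M j k * (c i * Real.exp (ev i * t) * b i k) := by
          simp only [Finset.mul_sum]; rw [Finset.sum_comm]
      _ = ∑ i, c i * Real.exp (ev i * t) * (ev i * b i j) := by
          refine Finset.sum_congr rfl fun i _ => ?_
          have h := congrFun (hb i) j
          simp only [mulVec, dotProduct, Pi.smul_apply, smul_eq_mul] at h
          rw [← h, Finset.mul_sum]
          exact Finset.sum_congr rfl fun k _ => by ring
  have hφ' : ∀ t, HasDerivAt φ (M *ᵥ φ t) t := by
    intro t
    rw [hMφ t]
    rw [hasDerivAt_pi]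
    intro j
    refine HasDerivAt.fun_sum fun i _ => ?_
    have h1 : HasDerivAt (fun t => Real.exp (ev i * t)) (Real.exp (ev i * t) * ev i) t := by
      simpa using ((hasDerivAt_id t).const_mul (ev i)).exp
    have h2 := (h1.const_mul (c i)).mul_const (b i j)
    convert h2 using 1
    · rfl
    ring
  intro t ht
  have K := (M.mulVecLin.toContinuousLinearMap).lipschitz
  have huniq := ODE_solution_unique (v := fun _ y => M *ᵥ y)
    (K := ‖M.mulVecLin.toContinuousLinearMap‖₊) (f := x) (g := φ) (a := 0) (b := t)
    (fun _ => K)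
    (fun s _ => (hx s).continuousAt.continuousWithinAt)
    (fun s _ => (hx s).hasDerivWithinAt)
    (fun s _ => (hφ' s).continuousAt.continuousWithinAt)
    (fun s _ => (hφ' s).hasDerivWithinAt)
    (by rw [hinit]; funext j; simp [hφ])
  exact huniq ⟨ht, le_refl t⟩

/-- for `ẋ = Mx` with `M` symmetric negative semidefinite, the
ratio of the (Euclidean) norms of two coordinate selections of `ẋ(t)` tends to
the corresponding ratio for the projection of `x(0)` onto the eigenspace of the
largest nonzero eigenvalue `μ`. -/
theorem relative_tempo_limit
    {n s₁ s₂ : ℕ} (M : Matrix (Fin n) (Fin n) ℝ) (hM : M.IsSymm)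
    (μ : ℝ) (hμneg : μ < 0)
    (hμeig : ∃ w : Fin n → ℝ, w ≠ 0 ∧ M.mulVec w = μ • w)
    (hle : ∀ (ν : ℝ) (w : Fin n → ℝ), w ≠ 0 → M.mulVec w = ν • w → ν ≤ 0)
    (hmax : ∀ (ν : ℝ) (w : Fin n → ℝ), w ≠ 0 → M.mulVec w = ν • w →
      ν ≠ 0 → ν ≤ μ)
    (P : Matrix (Fin n) (Fin n) ℝ) (hPsymm : P.IsSymm) (hPproj : P * P = P)
    (hPeig : M * P = μ • P)
    (hPrange : ∀ w : Fin n → ℝ, M.mulVec w = μ • w → P.mulVec w = w)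
    (x0 : Fin n → ℝ) (hx0 : P.mulVec x0 ≠ 0)
    (ψ₁ : Matrix (Fin s₁) (Fin n) ℝ) (hψ₁ : IsSelectionMatrix ψ₁)
    (ψ₂ : Matrix (Fin s₂) (Fin n) ℝ) (hψ₂ : IsSelectionMatrix ψ₂)
    (hψ₁P : ψ₁.mulVec (P.mulVec x0) ≠ 0)
    (hψ₂P : ψ₂.mulVec (P.mulVec x0) ≠ 0)
    (x : ℝ → Fin n → ℝ) (hx0' : x 0 = x0)
    (hx : ∀ t, HasDerivAt x (M.mulVec (x t)) t) :
    Tendsto (fun t => euclNorm (ψ₁.mulVec (M.mulVec (x t))) /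
        euclNorm (ψ₂.mulVec (M.mulVec (x t)))) atTop
      (nhds (euclNorm (ψ₁.mulVec (P.mulVec x0)) /
        euclNorm (ψ₂.mulVec (P.mulVec x0)))) := by
  -- Hermitian structure and spectral data
  have hA : M.IsHermitian := by
    rw [Matrix.IsHermitian, conjTranspose]
    ext i j
    simpa [Matrix.transpose_apply] using congrFun (congrFun hM.eq i) j
  set bE := hA.eigenvectorBasis with hbE
  set ev := hA.eigenvalues with hev
  set b : Fin n → Fin n → ℝ := fun i => (bE i : Fin n → ℝ) with hbdef
  have hb : ∀ i, M *ᵥ b i = ev i • b i := hA.mulVec_eigenvectorBasis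
  set c : Fin n → ℝ := fun i => bE.repr (WithLp.toLp 2 x0 : EuclideanSpace ℝ (Fin n)) i with hc
  -- expansion of x0
  have hx0exp : x0 = fun j => ∑ i, c i * b i j := by
    funext j
    have h := congrArg (EuclideanSpace.equiv (Fin n) ℝ)
      (bE.sum_repr (WithLp.toLp 2 x0 : EuclideanSpace ℝ (Fin n)))
    rw [map_sum] at h
    simp only [_root_.map_smul] at h
    have h' := congrFun h j
    simp only [Finset.sum_apply, Pi.smul_apply, smul_eq_mul] at h'
    exact h'.symm
  -- eigenvectors are nonzero
  have hbne : ∀ i, b i ≠ 0 := by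
    intro i h
    have h1 : ‖bE i‖ = 1 := bE.orthonormal.1 i
    have h0 : bE i = 0 := (WithLp.ofLp_eq_zero 2).1 h
    rw [h0, norm_zero] at h1
    exact one_ne_zero h1.symm
  -- symmetry of dot products
  have hsymM : ∀ u v : Fin n → ℝ, u ⬝ᵥ (M *ᵥ v) = (M *ᵥ u) ⬝ᵥ v := by
    intro u v
    simp only [dotProduct, mulVec, dotProduct, Finset.mul_sum, Finset.sum_mul]
    rw [Finset.sum_comm]
    refine Finset.sum_congr rfl fun i _ => Finset.sum_congr rfl fun k _ => ?_
    have : M i k = M k i := by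
      have := congrFun (congrFun hM.eq k) i
      simpa [Matrix.transpose_apply] using this
    rw [this]; ring
  have hsymP : ∀ u v : Fin n → ℝ, u ⬝ᵥ (P *ᵥ v) = (P *ᵥ u) ⬝ᵥ v := by
    intro u v
    simp only [dotProduct, mulVec, dotProduct, Finset.mul_sum, Finset.sum_mul]
    rw [Finset.sum_comm]
    refine Finset.sum_congr rfl fun i _ => Finset.sum_congr rfl fun k _ => ?_
    have : P i k = P k i := by
      have := congrFun (congrFun hPsymm.eq k) i
      simpa [Matrix.transpose_apply] using this
    rw [this]; ring
  -- orthogonality of non-μ eigenvectors to μ-eigenvectors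
  have horth : ∀ (w : Fin n → ℝ), M *ᵥ w = μ • w → ∀ i, ev i ≠ μ → b i ⬝ᵥ w = 0 := by
    intro w hw i hi
    have h1 : b i ⬝ᵥ (M *ᵥ w) = μ * (b i ⬝ᵥ w) := by rw [hw, dotProduct_smul, smul_eq_mul]
    have h2 : (M *ᵥ b i) ⬝ᵥ w = ev i * (b i ⬝ᵥ w) := by rw [hb i, smul_dotProduct, smul_eq_mul]
    have h3 := (hsymM (b i) w).symm.trans h1
    rw [h2] at h3
    have := sub_eq_zero.mpr h3
    rw [← sub_mul] at this
    exact (mul_eq_zero.1 this).resolve_left (sub_ne_zero.2 hi)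
  -- action of P on eigenvectors
  have hPb : ∀ i, P *ᵥ b i = if ev i = μ then b i else 0 := by
    intro i
    by_cases hi : ev i = μ
    · rw [if_pos hi]
      exact hPrange (b i) (by rw [hb i, hi])
    · rw [if_neg hi]
      set u := P *ᵥ b i with hu
      have hMu : M *ᵥ u = μ • u := by
        rw [hu, mulVec_mulVec, hPeig, smul_mulVec]
      have hPu : P *ᵥ u = u := hPrange u hMu
      have : u ⬝ᵥ u = 0 := by
        calc u ⬝ᵥ u = (P *ᵥ b i) ⬝ᵥ u := rfl
          _ = b i ⬝ᵥ (P *ᵥ u) := (hsymP (b i) u).symm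
          _ = b i ⬝ᵥ u := by rw [hPu]
          _ = 0 := horth u hMu i hi
      exact dotProduct_self_eq_zero.1 this
  -- P x0 in eigencoordinates
  have hPx0 : P *ᵥ x0 = fun j => ∑ i, (if ev i = μ then c i else 0) * b i j := by
    funext j
    conv_lhs => rw [hx0exp]
    simp only [mulVec, dotProduct]
    calc ∑ k, P j k * ∑ i, c i * b i k
        = ∑ i, c i * ∑ k, P j k * b i k := by
          simp only [Finset.mul_sum]
          rw [Finset.sum_comm]
          exact Finset.sum_congr rfl fun i _ => Finset.sum_congr rfl fun k _ => by ring
      _ = ∑ i, (if ev i = μ then c i else 0) * b i j := by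
          refine Finset.sum_congr rfl fun i _ => ?_
          have := congrFun (hPb i) j
          simp only [mulVec, dotProduct] at this
          rw [this]
          by_cases hi : ev i = μ <;> simp [hi]
  -- the solution formula
  have hsol := linear_ode_formula M c ev b hb x hx (by rw [hx0', hx0exp])
  -- the rescaled derivative and its limit
  set L : Fin n → ℝ := μ • P *ᵥ x0 with hL
  have hLcoord : L = fun j => ∑ i, (if ev i = μ then c i * μ else 0) * b i j := by
    funext j
    rw [hL, Pi.smul_apply, smul_eq_mul, hPx0, Finset.mul_sum]
    refine Finset.sum_congr rfl fun i _ => ?_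
    by_cases hi : ev i = μ <;> simp [hi] <;> ring
  have key : Tendsto (fun t => Real.exp (-μ * t) • (M *ᵥ x t)) atTop (nhds L) := by
    have heq : ∀ t ≥ (0:ℝ), (Real.exp (-μ * t) • (M *ᵥ x t)) =
        fun j => ∑ i, (c i * ev i) * Real.exp ((ev i - μ) * t) * b i j := by
      intro t ht
      rw [hsol t ht]
      funext j
      have hMx : (M *ᵥ fun j => ∑ i, c i * Real.exp (ev i * t) * b i j) j
          = ∑ i, c i * Real.exp (ev i * t) * (ev i * b i j) := by
        simp only [mulVec, dotProduct]
        calc ∑ k, M j k * ∑ i, c i * Real.exp (ev i * t) * b i k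
            = ∑ i, ∑ k, M j k * (c i * Real.exp (ev i * t) * b i k) := by
              simp only [Finset.mul_sum]; rw [Finset.sum_comm]
          _ = ∑ i, c i * Real.exp (ev i * t) * (ev i * b i j) := by
              refine Finset.sum_congr rfl fun i _ => ?_
              have h := congrFun (hb i) j
              simp only [mulVec, dotProduct, Pi.smul_apply, smul_eq_mul] at h
              rw [← h, Finset.mul_sum]
              exact Finset.sum_congr rfl fun k _ => by ring
      rw [Pi.smul_apply, smul_eq_mul, hMx, Finset.mul_sum]
      refine Finset.sum_congr rfl fun i _ => ?_
      have hee : Real.exp (-μ * t) * Real.exp (ev i * t) = Real.exp ((ev i - μ) * t) := by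
        rw [← Real.exp_add]; ring_nf
      calc Real.exp (-μ * t) * (c i * Real.exp (ev i * t) * (ev i * b i j))
          = c i * ev i * (Real.exp (-μ * t) * Real.exp (ev i * t)) * b i j := by ring
        _ = c i * ev i * Real.exp ((ev i - μ) * t) * b i j := by rw [hee]
    have hF : Tendsto (fun t => (fun j => ∑ i, (c i * ev i) * Real.exp ((ev i - μ) * t) * b i j))
        atTop (nhds L) := by
      rw [hLcoord, tendsto_pi_nhds]
      intro j
      refine tendsto_finset_sum _ fun i _ => ?_
      by_cases hi : ev i = μ
      · simp only [hi, sub_self, zero_mul, Real.exp_zero, mul_one, if_pos]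
        exact tendsto_const_nhds.congr fun t => by ring
      · rw [if_neg hi]
        by_cases h0 : ev i = 0
        · simp [h0]
        · have hlt : ev i < μ := lt_of_le_of_ne (hmax (ev i) (b i) (hbne i) (hb i) h0) hi
          have hexp : Tendsto (fun t => Real.exp ((ev i - μ) * t)) atTop (nhds 0) := by
            rw [Real.tendsto_exp_comp_nhds_zero]
            exact (tendsto_const_mul_atBot_of_neg (by linarith)).mpr tendsto_id
          have := (hexp.const_mul (c i * ev i)).mul_const (b i j)
          simpa using this
    refine hF.congr' ?_
    filter_upwards [eventually_ge_atTop (0:ℝ)] with t ht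
    exact (heq t ht).symm
  -- continuity of the norm functionals
  have hcont : ∀ {s : ℕ} (ψ : Matrix (Fin s) (Fin n) ℝ),
      Continuous fun v : Fin n → ℝ => euclNorm (ψ *ᵥ v) := by
    intro s ψ
    exact euclNorm_continuous.comp ψ.mulVecLin.toContinuousLinearMap.continuous
  have h1 : Tendsto (fun t => euclNorm (ψ₁ *ᵥ (Real.exp (-μ * t) • (M *ᵥ x t)))) atTop
      (nhds (euclNorm (ψ₁ *ᵥ L))) := ((hcont ψ₁).tendsto L).comp key
  have h2 : Tendsto (fun t => euclNorm (ψ₂ *ᵥ (Real.exp (-μ * t) • (M *ᵥ x t)))) atTop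
      (nhds (euclNorm (ψ₂ *ᵥ L))) := ((hcont ψ₂).tendsto L).comp key
  have hμne : |μ| ≠ 0 := abs_ne_zero.2 (ne_of_lt hμneg)
  have hψL : ∀ {s : ℕ} (ψ : Matrix (Fin s) (Fin n) ℝ),
      euclNorm (ψ *ᵥ L) = |μ| * euclNorm (ψ *ᵥ (P *ᵥ x0)) := by
    intro s ψ
    rw [hL, mulVec_smul, euclNorm_smul]
  have hne2 : euclNorm (ψ₂ *ᵥ L) ≠ 0 := by
    rw [hψL ψ₂]
    exact mul_ne_zero hμne (fun h => hψ₂P (euclNorm_eq_zero.1 h))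
  have hdiv := h1.div h2 hne2
  have hlimeq : euclNorm (ψ₁ *ᵥ L) / euclNorm (ψ₂ *ᵥ L) =
      euclNorm (ψ₁.mulVec (P.mulVec x0)) / euclNorm (ψ₂.mulVec (P.mulVec x0)) := by
    rw [hψL ψ₁, hψL ψ₂, mul_div_mul_left _ _ hμne]
  rw [← hlimeq]
  refine hdiv.congr fun t => ?_
  have hexp_ne : |Real.exp (-μ * t)| ≠ 0 := abs_ne_zero.2 (Real.exp_ne_zero _)
  simp only [Pi.div_apply]
  rw [mulVec_smul, mulVec_smul, euclNorm_smul, euclNorm_smul, mul_div_mul_left _ _ hexp_ne]
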